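/- Let 0 < h' ≤ h and let I₂ ≥ 0. Assume that for P-almost every x ∈ ℝ^m one has ∫ H_r(y−x)² (f(x)−f(y))² dμ(y) ≤ I₂ for both r = h and r = h'. Then E[ ‖(Δ̂_{h'} f − Δ̂_h f) − (Δ_{h'} f − Δ_h f)‖_{2,μ} ] ≤ 2·√(I₂ / n). -/

import Mathlib

open MeasureTheory ProbabilityTheory

/-- The Gaussian kernel `H_h(y) = (4π)^{-d/2} h^{-(d+2)} exp(−‖y‖²/(4h²))` on `ℝ^m`
(with the Euclidean norm). -/
noncomputable def gaussKernel (d m : ℕ) (h : ℝ) (y : EuclideanSpace ℝ (Fin m)) : ℝ :=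
  ((4 * Real.pi) ^ ((d : ℝ) / 2))⁻¹ * (h ^ (d + 2))⁻¹ * Real.exp (-‖y‖ ^ 2 / (4 * h ^ 2))

/-- The unnormalized graph Laplacian `Δ̂_h f(y) = (1/n) Σᵢ H_h(y − xᵢ)(f(xᵢ) − f(y))`
built on the points `x₁,…,x_n`. -/
noncomputable def hatDelta (d : ℕ) {m n : ℕ} (h : ℝ)
    (f : EuclideanSpace ℝ (Fin m) → ℝ) (x : Fin n → EuclideanSpace ℝ (Fin m))
    (y : EuclideanSpace ℝ (Fin m)) : ℝ :=
  (n : ℝ)⁻¹ * ∑ i, gaussKernel d m h (y - x i) * (f (x i) - f y)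

/-- The mean operator `Δ_h f(y) = ∫ H_h(y − x)(f(x) − f(y)) dP(x)`. -/
noncomputable def meanDelta (d : ℕ) {m : ℕ} (h : ℝ)
    (P : Measure (EuclideanSpace ℝ (Fin m)))
    (f : EuclideanSpace ℝ (Fin m) → ℝ) (y : EuclideanSpace ℝ (Fin m)) : ℝ :=
  ∫ x, gaussKernel d m h (y - x) * (f x - f y) ∂P

/- ### Auxiliary lemmas -/

lemma l65_integrable {α : Type*} [MeasurableSpace α] (ν : Measure α) [IsFiniteMeasure ν]
    {g : α → ℝ} (hg : AEStronglyMeasurable g ν) (K : ℝ) (hK : ∀ a, |g a| ≤ K) :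
    Integrable g ν := by
  rw [← memLp_one_iff_integrable]
  exact MemLp.of_bound hg K (Filter.Eventually.of_forall fun a => by
    simpa [Real.norm_eq_abs] using hK a)

lemma l65_kernel_cont (d m : ℕ) (r : ℝ) : Continuous (gaussKernel d m r) := by
  unfold gaussKernel
  fun_prop

lemma l65_kernel_nonneg (d m : ℕ) {r : ℝ} (hr : 0 < r) (u : EuclideanSpace ℝ (Fin m)) :
    0 ≤ gaussKernel d m r u := by
  unfold gaussKernel
  positivity

lemma l65_kernel_le (d m : ℕ) {r : ℝ} (hr : 0 < r) (u : EuclideanSpace ℝ (Fin m)) :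
    gaussKernel d m r u ≤ ((4 * Real.pi) ^ ((d : ℝ) / 2))⁻¹ * (r ^ (d + 2))⁻¹ := by
  unfold gaussKernel
  have h1 : Real.exp (-‖u‖ ^ 2 / (4 * r ^ 2)) ≤ 1 := by
    rw [Real.exp_le_one_iff]
    have : (0:ℝ) ≤ ‖u‖ ^ 2 := sq_nonneg _
    have : (0:ℝ) < 4 * r ^ 2 := by positivity
    apply div_nonpos_of_nonpos_of_nonneg <;> nlinarith [sq_nonneg ‖u‖]
  have h2 : (0:ℝ) ≤ ((4 * Real.pi) ^ ((d : ℝ) / 2))⁻¹ * (r ^ (d + 2))⁻¹ := by positivity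
  calc ((4 * Real.pi) ^ ((d : ℝ) / 2))⁻¹ * (r ^ (d + 2))⁻¹ * Real.exp (-‖u‖ ^ 2 / (4 * r ^ 2))
      ≤ ((4 * Real.pi) ^ ((d : ℝ) / 2))⁻¹ * (r ^ (d + 2))⁻¹ * 1 :=
        mul_le_mul_of_nonneg_left h1 h2
    _ = ((4 * Real.pi) ^ ((d : ℝ) / 2))⁻¹ * (r ^ (d + 2))⁻¹ := mul_one _

lemma l65_sq_integral_le {Ω : Type*} [MeasurableSpace Ω] (Pr : Measure Ω)
    [IsProbabilityMeasure Pr] {F : Ω → ℝ} (hF : MemLp F 2 Pr) :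
    (∫ ω, F ω ∂Pr) ^ 2 ≤ ∫ ω, F ω ^ 2 ∂Pr := by
  have h := variance_nonneg F Pr
  rw [variance_eq_sub hF] at h
  have e : Pr[F ^ 2] = ∫ ω, F ω ^ 2 ∂Pr := by
    apply integral_congr_ae; filter_upwards with ω; simp
  rw [e] at h
  linarith

set_option maxHeartbeats 1600000 in
/-- Expected-supremum bound of Lemma 6.5: if the squared kernel moment is bounded by `I₂` for
both bandwidths `h' ≤ h` (`P`-a.e.), then
`E[‖(Δ̂_{h'}f − Δ̂_h f) − (Δ_{h'}f − Δ_h f)‖_{2,μ}] ≤ 2√(I₂/n)`. -/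
theorem lemma65_expectation_bound
    {Ω : Type*} [MeasurableSpace Ω] (Pr : Measure Ω) [IsProbabilityMeasure Pr]
    (m d n : ℕ) (hm : 1 ≤ m) (hd : 1 ≤ d) (hn : 1 ≤ n)
    (h h' : ℝ) (hh' : 0 < h') (hh'h : h' ≤ h)
    (μ P : Measure (EuclideanSpace ℝ (Fin m))) [IsFiniteMeasure μ] [IsProbabilityMeasure P]
    (f : EuclideanSpace ℝ (Fin m) → ℝ) (hf : Measurable f)
    (C : ℝ) (hfb : ∀ x, |f x| ≤ C)
    (X : Fin n → Ω → EuclideanSpace ℝ (Fin m)) (hXmeas : ∀ i, Measurable (X i))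
    (hindep : iIndepFun X Pr)
    (hlaw : ∀ i, Pr.map (X i) = P)
    (I₂ : ℝ) (hI₂ : 0 ≤ I₂)
    (hmomh : ∀ᵐ x ∂P, ∫ y, gaussKernel d m h (y - x) ^ 2 * (f x - f y) ^ 2 ∂μ ≤ I₂)
    (hmomh' : ∀ᵐ x ∂P, ∫ y, gaussKernel d m h' (y - x) ^ 2 * (f x - f y) ^ 2 ∂μ ≤ I₂) :
    ∫ ω, Real.sqrt (∫ y,
        ((hatDelta d h' f (fun i => X i ω) y - hatDelta d h f (fun i => X i ω) y)
          - (meanDelta d h' P f y - meanDelta d h P f y)) ^ 2 ∂μ) ∂Pr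
      ≤ 2 * Real.sqrt (I₂ / n) := by
  classical
  have hh : 0 < h := lt_of_lt_of_le hh' hh'h
  have hn0 : (n : ℝ) ≠ 0 := Nat.cast_ne_zero.mpr (by omega)
  have hnpos : (0:ℝ) < n := by positivity
  have hC : 0 ≤ C := le_trans (abs_nonneg _) (hfb 0)
  set κ : ℝ → ℝ := fun r => ((4 * Real.pi) ^ ((d : ℝ) / 2))⁻¹ * (r ^ (d + 2))⁻¹ with hκ
  clear_value κ
  have hκh' : 0 ≤ κ h' := by rw [hκ]; positivity
  have hκh : 0 ≤ κ h := by rw [hκ]; positivity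
  set G : EuclideanSpace ℝ (Fin m) → EuclideanSpace ℝ (Fin m) → ℝ :=
    fun x y => (gaussKernel d m h' (y - x) - gaussKernel d m h (y - x)) * (f x - f y) with hG
  clear_value G
  set K : ℝ := (κ h' + κ h) * (2 * C) with hKdef
  clear_value K
  have hKnn : 0 ≤ K := by rw [hKdef]; positivity
  have hfd : ∀ x y, |f x - f y| ≤ 2 * C := by
    intro x y
    calc |f x - f y| ≤ |f x| + |f y| := abs_sub _ _
      _ ≤ 2 * C := by have := hfb x; have := hfb y; linarith
  have hGb : ∀ x y, |G x y| ≤ K := by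
    intro x y
    have h1 : |gaussKernel d m h' (y - x) - gaussKernel d m h (y - x)| ≤ κ h' + κ h := by
      calc |gaussKernel d m h' (y - x) - gaussKernel d m h (y - x)|
          ≤ |gaussKernel d m h' (y - x)| + |gaussKernel d m h (y - x)| := abs_sub _ _
        _ ≤ κ h' + κ h := by
            simp only [hκ]
            rw [abs_of_nonneg (l65_kernel_nonneg d m hh' _),
              abs_of_nonneg (l65_kernel_nonneg d m hh _)]
            exact add_le_add (l65_kernel_le d m hh' _) (l65_kernel_le d m hh _)
    calc |G x y| = |gaussKernel d m h' (y - x) - gaussKernel d m h (y - x)| * |f x - f y| := by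
          rw [hG]; exact abs_mul _ _
      _ ≤ (κ h' + κ h) * (2 * C) := mul_le_mul h1 (hfd x y) (abs_nonneg _) (by positivity)
      _ = K := hKdef.symm
  -- measurability of G
  have hGm : Measurable (fun p : EuclideanSpace ℝ (Fin m) × EuclideanSpace ℝ (Fin m) => G p.1 p.2) := by
    rw [hG]
    exact ((((l65_kernel_cont d m h').measurable.comp (measurable_snd.sub measurable_fst)).sub
      ((l65_kernel_cont d m h).measurable.comp (measurable_snd.sub measurable_fst))).mul
      ((hf.comp measurable_fst).sub (hf.comp measurable_snd)))
  have hGym : ∀ y, Measurable fun x => G x y := fun y =>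
    Measurable.of_uncurry_right (f := G) hGm
  have hGxm : ∀ x, Measurable fun y => G x y := fun x =>
    Measurable.of_uncurry_left (f := G) hGm
  have hGint : ∀ y, Integrable (fun x => G x y) P := fun y =>
    l65_integrable P (hGym y).aestronglyMeasurable K (fun x => hGb x y)
  have hGsqb : ∀ x y, |G x y ^ 2| ≤ K ^ 2 := by
    intro x y
    rw [abs_of_nonneg (sq_nonneg _)]
    have := abs_le.mp (hGb x y)
    nlinarith
  have hGsqint : ∀ y, Integrable (fun x => G x y ^ 2) P := fun y =>
    l65_integrable P ((hGym y).pow_const 2).aestronglyMeasurable (K ^ 2) (fun x => hGsqb x y)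
  -- the mean
  set a : EuclideanSpace ℝ (Fin m) → ℝ := fun y => ∫ x, G x y ∂P with ha
  clear_value a
  have ham : Measurable a := by
    rw [ha]
    exact (hGm.stronglyMeasurable.integral_prod_left').measurable
  have hab : ∀ y, |a y| ≤ K := by
    intro y
    rw [ha]
    calc |∫ x, G x y ∂P| ≤ ∫ x, |G x y| ∂P := by
          simpa [Real.norm_eq_abs] using norm_integral_le_integral_norm (μ := P) (fun x => G x y)
      _ ≤ ∫ x, K ∂P := integral_mono (hGint y).abs (integrable_const K) (fun x => hGb x y)
      _ = K := by simp
  -- integrability of one-kernel terms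
  have hkint : ∀ r, 0 < r → ∀ y,
      Integrable (fun x => gaussKernel d m r (y - x) * (f x - f y)) P := by
    intro r hr y
    refine l65_integrable P ?_ (κ r * (2 * C)) ?_
    · exact (((l65_kernel_cont d m r).measurable.comp (measurable_const.sub measurable_id)).mul
        (hf.sub measurable_const)).aestronglyMeasurable
    · intro x
      simp only [hκ]
      rw [abs_mul, abs_of_nonneg (l65_kernel_nonneg d m hr _)]
      exact mul_le_mul (l65_kernel_le d m hr _) (hfd x y)
        (abs_nonneg _) (by positivity)
  -- the centered process
  set Z : Ω → EuclideanSpace ℝ (Fin m) → ℝ :=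
    fun ω y => (n : ℝ)⁻¹ * ∑ i, G (X i ω) y - a y with hZ
  clear_value Z
  have hpt : ∀ ω y,
      ((hatDelta d h' f (fun i => X i ω) y - hatDelta d h f (fun i => X i ω) y)
        - (meanDelta d h' P f y - meanDelta d h P f y)) = Z ω y := by
    intro ω y
    have h1 : hatDelta d h' f (fun i => X i ω) y - hatDelta d h f (fun i => X i ω) y
        = (n : ℝ)⁻¹ * ∑ i, G (X i ω) y := by
      simp only [hatDelta, hG, ← mul_sub, ← Finset.sum_sub_distrib, sub_mul]
    have h2 : meanDelta d h' P f y - meanDelta d h P f y = a y := by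
      have e : a y = ∫ x, (gaussKernel d m h' (y - x) * (f x - f y)
          - gaussKernel d m h (y - x) * (f x - f y)) ∂P := by
        rw [ha]
        refine integral_congr_ae (Filter.Eventually.of_forall fun x => ?_)
        simp only [hG]
        ring
      rw [meanDelta, meanDelta, e, integral_sub (hkint h' hh' y) (hkint h hh y)]
    rw [h1, h2, hZ]
  have hZm : Measurable (fun p : Ω × EuclideanSpace ℝ (Fin m) => Z p.1 p.2) := by
    simp only [hZ]
    refine Measurable.sub ?_ (ham.comp measurable_snd)
    refine Measurable.const_mul ?_ _
    refine Finset.measurable_sum _ (fun i _ => ?_)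
    exact Measurable.comp (g := fun p => G p.1 p.2)
      (f := fun p : Ω × EuclideanSpace ℝ (Fin m) => (X i p.1, p.2)) hGm
      (((hXmeas i).comp measurable_fst).prodMk measurable_snd)
  have hZb : ∀ ω y, |Z ω y| ≤ 2 * K := by
    intro ω y
    have h1 : |(n : ℝ)⁻¹ * ∑ i, G (X i ω) y| ≤ K := by
      rw [abs_mul, abs_inv, Nat.abs_cast]
      have h2 : |∑ i, G (X i ω) y| ≤ (n : ℝ) * K := by
        calc |∑ i, G (X i ω) y| ≤ ∑ i, |G (X i ω) y| := Finset.abs_sum_le_sum_abs _ _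
          _ ≤ ∑ _i : Fin n, K := Finset.sum_le_sum fun i _ => hGb _ _
          _ = (n : ℝ) * K := by
              rw [Finset.sum_const, Finset.card_univ, Fintype.card_fin, nsmul_eq_mul]
      calc (n : ℝ)⁻¹ * |∑ i, G (X i ω) y| ≤ (n : ℝ)⁻¹ * ((n : ℝ) * K) := by
            exact mul_le_mul_of_nonneg_left h2 (by positivity)
        _ = K := by field_simp
    calc |Z ω y| ≤ |(n : ℝ)⁻¹ * ∑ i, G (X i ω) y| + |a y| := by rw [hZ]; exact abs_sub _ _
      _ ≤ K + K := add_le_add h1 (hab y)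
      _ = 2 * K := by ring
  have hZsqb : ∀ ω y, |Z ω y ^ 2| ≤ (2 * K) ^ 2 := by
    intro ω y
    rw [abs_of_nonneg (sq_nonneg _)]
    have := abs_le.mp (hZb ω y)
    nlinarith
  -- the inner L² norm squared
  set u : Ω → ℝ := fun ω => ∫ y, Z ω y ^ 2 ∂μ with hu
  clear_value u
  set M : ℝ := (μ Set.univ).toReal with hM
  clear_value M
  have hMnn : 0 ≤ M := by rw [hM]; exact ENNReal.toReal_nonneg
  have hum : Measurable u := by
    rw [hu]
    exact ((hZm.pow_const 2).stronglyMeasurable.integral_prod_right').measurable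
  have hunn : ∀ ω, 0 ≤ u ω := fun ω => by
    rw [hu]; exact integral_nonneg fun y => sq_nonneg _
  have hub : ∀ ω, u ω ≤ M * (2 * K) ^ 2 := by
    intro ω
    rw [hu, hM]
    calc ∫ y, Z ω y ^ 2 ∂μ ≤ ∫ _y, (2 * K) ^ 2 ∂μ := by
          refine integral_mono ?_ (integrable_const _) ?_
          · exact l65_integrable μ
              (((Measurable.of_uncurry_left (f := Z) hZm).pow_const 2).aestronglyMeasurable)
              ((2 * K) ^ 2) (fun y => hZsqb ω y)
          · intro y
            show Z ω y ^ 2 ≤ (2 * K) ^ 2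
            have := abs_le.mp (hZb ω y); nlinarith
      _ = (μ Set.univ).toReal * (2 * K) ^ 2 := by rw [integral_const, smul_eq_mul, measureReal_def]
  -- change of variables
  have hchange : ∀ (i : Fin n) (φ : EuclideanSpace ℝ (Fin m) → ℝ), Measurable φ →
      ∫ ω, φ (X i ω) ∂Pr = ∫ x, φ x ∂P := by
    intro i φ hφ
    rw [← hlaw i, integral_map (hXmeas i).aemeasurable hφ.aestronglyMeasurable]
  -- per-y variance bound
  have hvar : ∀ y, ∫ ω, Z ω y ^ 2 ∂Pr ≤ (n : ℝ)⁻¹ * ∫ x, G x y ^ 2 ∂P := by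
    intro y
    set V : Fin n → Ω → ℝ := fun i ω => G (X i ω) y - a y with hV
    clear_value V
    have hVm : ∀ i, Measurable (V i) := by
      intro i
      rw [hV]
      exact (Measurable.comp (g := fun x => G x y) (f := X i) (hGym y) (hXmeas i)).sub
        measurable_const
    have hVb : ∀ i ω, |V i ω| ≤ 2 * K := by
      intro i ω
      calc |V i ω| ≤ |G (X i ω) y| + |a y| := by rw [hV]; exact abs_sub _ _
        _ ≤ K + K := add_le_add (hGb _ _) (hab y)
        _ = 2 * K := by ring
    have hVint : ∀ i, Integrable (V i) Pr := fun i =>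
      l65_integrable Pr (hVm i).aestronglyMeasurable (2 * K) (hVb i)
    have hVVint : ∀ i j, Integrable (fun ω => V i ω * V j ω) Pr := fun i j =>
      l65_integrable Pr ((hVm i).mul (hVm j)).aestronglyMeasurable ((2 * K) * (2 * K))
        (fun ω => by rw [abs_mul]; exact mul_le_mul (hVb i ω) (hVb j ω) (abs_nonneg _) (by linarith))
    have hVmean : ∀ i, ∫ ω, V i ω ∂Pr = 0 := by
      intro i
      have e : ∫ ω, V i ω ∂Pr = ∫ x, (G x y - a y) ∂P := by
        rw [hV]
        exact hchange i (fun x => G x y - a y) ((hGym y).sub measurable_const)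
      rw [e, integral_sub (hGint y) (integrable_const _), integral_const]
      simp [ha]
    have hcross : ∀ i j, i ≠ j → ∫ ω, V i ω * V j ω ∂Pr = 0 := by
      intro i j hij
      have hind : IndepFun (V i) (V j) Pr := by
        have h0 := hindep.indepFun hij
        rw [hV]
        exact h0.comp ((hGym y).sub measurable_const) ((hGym y).sub measurable_const)
      have e : ∫ ω, V i ω * V j ω ∂Pr = ∫ ω, (V i * V j) ω ∂Pr := rfl
      rw [e, hind.integral_mul_eq_mul_integral (hVm i).aestronglyMeasurable (hVm j).aestronglyMeasurable,
        hVmean i, hVmean j, zero_mul]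
    have hdiag : ∀ i, ∫ ω, V i ω ^ 2 ∂Pr ≤ ∫ x, G x y ^ 2 ∂P := by
      intro i
      have e : ∫ ω, V i ω ^ 2 ∂Pr = ∫ x, (G x y - a y) ^ 2 ∂P := by
        rw [hV]
        exact hchange i (fun x => (G x y - a y) ^ 2)
          (((hGym y).sub measurable_const).pow_const 2)
      rw [e]
      have e2 : (fun x => (G x y - a y) ^ 2)
          = fun x => G x y ^ 2 - (2 * a y * G x y - a y ^ 2) := by
        funext x; ring
      have hint1 : Integrable (fun x => 2 * a y * G x y) P := (hGint y).const_mul (2 * a y)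
      have hint2 : Integrable (fun x => 2 * a y * G x y - a y ^ 2) P :=
        hint1.sub (integrable_const _)
      rw [e2, integral_sub (hGsqint y) hint2]
      have h3 : ∫ x, (2 * a y * G x y - a y ^ 2) ∂P = a y ^ 2 := by
        rw [integral_sub hint1 (integrable_const _), integral_const_mul,
          integral_const]
        have h4 : ∫ x, G x y ∂P = a y := by rw [ha]
        rw [h4]; simp; ring
      rw [h3]
      nlinarith [sq_nonneg (a y)]
    have hZeq : ∀ ω, Z ω y = (n : ℝ)⁻¹ * ∑ i, V i ω := by
      intro ω
      rw [hZ, hV]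
      simp only
      rw [Finset.sum_sub_distrib, Finset.sum_const, Finset.card_univ, Fintype.card_fin,
        nsmul_eq_mul, mul_sub]
      congr 1
      field_simp
    calc ∫ ω, Z ω y ^ 2 ∂Pr = ∫ ω, ((n : ℝ)⁻¹) ^ 2 * (∑ i, V i ω) ^ 2 ∂Pr := by
          apply integral_congr_ae; filter_upwards with ω; rw [hZeq ω, mul_pow]
      _ = ((n : ℝ)⁻¹) ^ 2 * ∫ ω, (∑ i, V i ω) ^ 2 ∂Pr := integral_const_mul _ _
      _ = ((n : ℝ)⁻¹) ^ 2 * ∑ i, ∑ j, ∫ ω, V i ω * V j ω ∂Pr := by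
          congr 1
          have e : (fun ω => (∑ i, V i ω) ^ 2) = fun ω => ∑ i, ∑ j, V i ω * V j ω := by
            funext ω; rw [sq, Finset.sum_mul_sum]
          rw [e, integral_finset_sum _ (fun i _ => integrable_finset_sum _ (fun j _ => hVVint i j))]
          exact Finset.sum_congr rfl fun i _ =>
            integral_finset_sum _ (fun j _ => hVVint i j)
      _ ≤ ((n : ℝ)⁻¹) ^ 2 * ∑ _i : Fin n, ∫ x, G x y ^ 2 ∂P := by
          refine mul_le_mul_of_nonneg_left ?_ (by positivity)
          have e : ∀ i : Fin n, ∑ j, ∫ ω, V i ω * V j ω ∂Pr = ∫ ω, V i ω ^ 2 ∂Pr := by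
            intro i
            rw [Finset.sum_eq_single i]
            · congr 1; funext ω; rw [sq]
            · intro j _ hj; exact hcross i j (Ne.symm hj)
            · intro hi; exact absurd (Finset.mem_univ i) hi
          calc ∑ i, ∑ j, ∫ ω, V i ω * V j ω ∂Pr = ∑ i, ∫ ω, V i ω ^ 2 ∂Pr :=
                Finset.sum_congr rfl fun i _ => e i
            _ ≤ ∑ _i : Fin n, ∫ x, G x y ^ 2 ∂P := Finset.sum_le_sum fun i _ => hdiag i
      _ = (n : ℝ)⁻¹ * ∫ x, G x y ^ 2 ∂P := by
          rw [Finset.sum_const, Finset.card_univ, Fintype.card_fin, nsmul_eq_mul]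
          field_simp
  -- a.e. bound on the second moment of G
  have hGsqy : ∀ᵐ x ∂P, ∫ y, G x y ^ 2 ∂μ ≤ 4 * I₂ := by
    filter_upwards [hmomh, hmomh'] with x h1 h2
    have e : ∀ y, G x y ^ 2 ≤ 2 * (gaussKernel d m h' (y - x) ^ 2 * (f x - f y) ^ 2)
        + 2 * (gaussKernel d m h (y - x) ^ 2 * (f x - f y) ^ 2) := by
      intro y
      simp only [hG]
      nlinarith [sq_nonneg ((gaussKernel d m h' (y - x) + gaussKernel d m h (y - x)) * (f x - f y)),
        sq_nonneg (f x - f y)]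
    have hki : ∀ r, 0 < r → Integrable
        (fun y => gaussKernel d m r (y - x) ^ 2 * (f x - f y) ^ 2) μ := by
      intro r hr
      refine l65_integrable μ ?_ ((κ r) ^ 2 * (2 * C) ^ 2) ?_
      · exact ((((l65_kernel_cont d m r).measurable.comp
          (measurable_id.sub measurable_const)).pow_const 2).mul
          ((measurable_const.sub hf).pow_const 2)).aestronglyMeasurable
      · intro y
        simp only [hκ]
        rw [abs_mul, abs_of_nonneg (sq_nonneg _), abs_of_nonneg (sq_nonneg _)]
        have hk1 := l65_kernel_nonneg d m hr (y - x)
        have hk2 := l65_kernel_le d m hr (y - x)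
        have hk3 := abs_le.mp (hfd x y)
        have hk4 : (0:ℝ) ≤ ((4 * Real.pi) ^ ((d : ℝ) / 2))⁻¹ * (r ^ (d + 2))⁻¹ := by
          positivity
        have h6 : gaussKernel d m r (y - x) ^ 2
            ≤ (((4 * Real.pi) ^ ((d : ℝ) / 2))⁻¹ * (r ^ (d + 2))⁻¹) ^ 2 := by nlinarith
        have h5 : (f x - f y) ^ 2 ≤ (2 * C) ^ 2 := by nlinarith
        nlinarith [sq_nonneg (gaussKernel d m r (y - x)), sq_nonneg (f x - f y)]
    calc ∫ y, G x y ^ 2 ∂μ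
        ≤ ∫ y, (2 * (gaussKernel d m h' (y - x) ^ 2 * (f x - f y) ^ 2)
            + 2 * (gaussKernel d m h (y - x) ^ 2 * (f x - f y) ^ 2)) ∂μ := by
          refine integral_mono ?_ (((hki h' hh').const_mul 2).add ((hki h hh).const_mul 2))
            (fun y => e y)
          exact l65_integrable μ ((hGxm x).pow_const 2).aestronglyMeasurable (K ^ 2)
            (fun y => hGsqb x y)
      _ = 2 * ∫ y, gaussKernel d m h' (y - x) ^ 2 * (f x - f y) ^ 2 ∂μ
          + 2 * ∫ y, gaussKernel d m h (y - x) ^ 2 * (f x - f y) ^ 2 ∂μ := by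
          rw [integral_add ((hki h' hh').const_mul 2) ((hki h hh).const_mul 2),
            integral_const_mul, integral_const_mul]
      _ ≤ 2 * I₂ + 2 * I₂ := by
          have := h1; have := h2
          gcongr
      _ = 4 * I₂ := by ring
  -- main moment bound
  have hswap : ∫ ω, u ω ∂Pr = ∫ y, ∫ ω, Z ω y ^ 2 ∂Pr ∂μ := by
    rw [hu]
    apply integral_integral_swap
    exact l65_integrable _ ((hZm.pow_const 2).aestronglyMeasurable) ((2 * K) ^ 2)
      (fun p => hZsqb p.1 p.2)
  have hinnerP : Integrable (fun y => ∫ x, G x y ^ 2 ∂P) μ := by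
    refine l65_integrable μ ?_ (K ^ 2) ?_
    · exact ((hGm.pow_const 2).stronglyMeasurable.integral_prod_left').measurable.aestronglyMeasurable
    · intro y
      rw [abs_of_nonneg (integral_nonneg fun x => sq_nonneg _)]
      calc ∫ x, G x y ^ 2 ∂P ≤ ∫ _x, K ^ 2 ∂P :=
            integral_mono (hGsqint y) (integrable_const _)
              (fun x => by have := abs_le.mp (hGb x y); nlinarith)
        _ = K ^ 2 := by simp
  have hmain : ∫ ω, u ω ∂Pr ≤ 4 * I₂ / n := by
    rw [hswap]
    have hGprodint : Integrable
        (fun p : EuclideanSpace ℝ (Fin m) × EuclideanSpace ℝ (Fin m) => G p.1 p.2 ^ 2)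
        (P.prod μ) :=
      l65_integrable _ ((hGm.pow_const 2).aestronglyMeasurable) (K ^ 2)
        (fun p => hGsqb p.1 p.2)
    calc ∫ y, ∫ ω, Z ω y ^ 2 ∂Pr ∂μ ≤ ∫ y, (n : ℝ)⁻¹ * ∫ x, G x y ^ 2 ∂P ∂μ := by
          refine integral_mono_of_nonneg ?_ (hinnerP.const_mul _) ?_
          · filter_upwards with y; exact integral_nonneg fun ω => sq_nonneg _
          · filter_upwards with y; exact hvar y
      _ = (n : ℝ)⁻¹ * ∫ y, ∫ x, G x y ^ 2 ∂P ∂μ := integral_const_mul _ _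
      _ = (n : ℝ)⁻¹ * ∫ x, ∫ y, G x y ^ 2 ∂μ ∂P := by
          congr 1
          exact (integral_integral_swap hGprodint).symm
      _ ≤ (n : ℝ)⁻¹ * (4 * I₂) := by
          refine mul_le_mul_of_nonneg_left ?_ (by positivity)
          calc ∫ x, ∫ y, G x y ^ 2 ∂μ ∂P ≤ ∫ _x, 4 * I₂ ∂P := by
                refine integral_mono_of_nonneg ?_ (integrable_const _) hGsqy
                filter_upwards with x; exact integral_nonneg fun y => sq_nonneg _
            _ = 4 * I₂ := by simp
      _ = 4 * I₂ / n := by field_simp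
  -- Jensen step
  have hFmem : MemLp (fun ω => Real.sqrt (u ω)) 2 Pr := by
    refine MemLp.of_bound (Real.continuous_sqrt.measurable.comp hum).aestronglyMeasurable
      (Real.sqrt (M * (2 * K) ^ 2)) ?_
    filter_upwards with ω
    rw [Real.norm_eq_abs, abs_of_nonneg (Real.sqrt_nonneg _)]
    exact Real.sqrt_le_sqrt (hub ω)
  have hjensen : ∫ ω, Real.sqrt (u ω) ∂Pr ≤ Real.sqrt (∫ ω, u ω ∂Pr) := by
    have h1 : (∫ ω, Real.sqrt (u ω) ∂Pr) ^ 2 ≤ ∫ ω, Real.sqrt (u ω) ^ 2 ∂Pr :=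
      l65_sq_integral_le Pr hFmem
    have h2 : ∫ ω, Real.sqrt (u ω) ^ 2 ∂Pr = ∫ ω, u ω ∂Pr := by
      apply integral_congr_ae; filter_upwards with ω; rw [Real.sq_sqrt (hunn ω)]
    have h3 : 0 ≤ ∫ ω, Real.sqrt (u ω) ∂Pr := integral_nonneg fun ω => Real.sqrt_nonneg _
    calc ∫ ω, Real.sqrt (u ω) ∂Pr = Real.sqrt ((∫ ω, Real.sqrt (u ω) ∂Pr) ^ 2) :=
          (Real.sqrt_sq h3).symm
      _ ≤ Real.sqrt (∫ ω, u ω ∂Pr) := Real.sqrt_le_sqrt (by rw [← h2]; exact h1)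
  -- assemble
  have hLHS : ∫ ω, Real.sqrt (∫ y,
      ((hatDelta d h' f (fun i => X i ω) y - hatDelta d h f (fun i => X i ω) y)
        - (meanDelta d h' P f y - meanDelta d h P f y)) ^ 2 ∂μ) ∂Pr
      = ∫ ω, Real.sqrt (u ω) ∂Pr := by
    apply integral_congr_ae; filter_upwards with ω
    congr 1
    rw [hu]
    apply integral_congr_ae; filter_upwards with y
    rw [hpt ω y]
  rw [hLHS]
  calc ∫ ω, Real.sqrt (u ω) ∂Pr ≤ Real.sqrt (∫ ω, u ω ∂Pr) := hjensen
    _ ≤ Real.sqrt (4 * I₂ / n) := Real.sqrt_le_sqrt hmain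
    _ = 2 * Real.sqrt (I₂ / n) := by
        rw [show 4 * I₂ / (n : ℝ) = 2 ^ 2 * (I₂ / n) by ring,
          Real.sqrt_mul (by positivity) _, Real.sqrt_sq (by norm_num)]
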